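/- Let n, L be integers with 1 ≤ L < n/2 and let A ∈ 𝒜_L be the circulant symmetric matrix with first row (a_0, a_1, …, a_L, 0, …, 0, a_L, …, a_2, a_1), where a_0 + 2(a_1 + ⋯ + a_L) = 0 and a_1 + 2a_2 + ⋯ + L·a_L = 0. Let X = θ + ε with θ ∈ Θ_L deterministic and ε a random vector with E[ε_i] = 0, E[ε_i²] < ∞, and Cov(ε_i, ε_j) = γ_{|i-j|}. Then E[XᵀAX] = n·a_0·γ_0 + 2·Σ_{h=1}^{L} (n−h)·a_h·γ_h + 2·Σ_{h=1}^{L} h·a_h·γ_{n-h}. Moreover, a_0 = 0 if and only if a_1 + a_2 + ⋯ + a_L = 0, so the coefficient of γ_0 in E[XᵀAX] vanishes exactly when a_1 + ⋯ + a_L = 0. -/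

import Mathlib

open MeasureTheory Finset
open Fin.NatCast Fin.CommRing

/-- `Θ_L`: the set of piecewise-constant vectors in `ℝⁿ` all of whose constant
segments have length at least `L`. -/
def ThetaSet (n L : ℕ) : Set (Fin n → ℝ) :=
  {θ | ∃ (k : ℕ) (t : ℕ → ℕ) (c : ℕ → ℝ),
    0 < k ∧ t 0 = 0 ∧ t k = n ∧
    (∀ j < k, t j + L ≤ t (j + 1)) ∧
    (∀ j < k, ∀ i : Fin n, t j ≤ i.val → i.val < t (j + 1) → θ i = c j)}

lemma sep (n L : ℕ) [NeZero n] (hL : 1 ≤ L) (hLn : 2 * L < n) (θ : Fin n → ℝ)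
    (hθ : θ ∈ ThetaSet n L) (p : Fin n) (m : ℕ) (hm1 : 1 ≤ m) (hm2 : m < L) :
    (θ (p + 1) - θ p) * (θ (p + (m : Fin n) + 1) - θ (p + (m : Fin n))) = 0 := by
  obtain ⟨k, t, c, hk, ht0, htk, hstep, hconst⟩ := hθ
  -- monotonicity
  have mono : ∀ b ≤ k, ∀ a ≤ b, t a + L * (b - a) ≤ t b := by
    intro b
    induction b with
    | zero => intro _ a ha; interval_cases a; simp
    | succ b ih =>
      intro hb a ha
      rcases Nat.eq_or_lt_of_le ha with rfl | ha'
      · simp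
      · have ha2 : a ≤ b := by omega
        have h1 := ih (by omega) a ha2
        have h2 := hstep b (by omega)
        have h3 : L * (b + 1 - a) = L * (b - a) + L := by
          have : b + 1 - a = (b - a) + 1 := by omega
          rw [this, Nat.mul_succ]
        omega
  -- segment existence
  have seg : ∀ m ≤ k, ∀ x, x < t m → ∃ j < k, t j ≤ x ∧ x < t (j + 1) := by
    intro m
    induction m with
    | zero => intro _ x hx; omega
    | succ m ih =>
      intro hm x hx
      rcases Nat.lt_or_ge x (t m) with h | h
      · exact ih (by omega) x h
      · exact ⟨m, by omega, h, hx⟩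
  -- boundary characterization
  have bdry : ∀ i : Fin n, θ (i + 1) ≠ θ i → ∃ j, 1 ≤ j ∧ j ≤ k ∧ i.val + 1 = t j := by
    intro i hi
    rcases Nat.lt_or_ge (i.val + 1) n with hin | hin
    · obtain ⟨j, hj, h1, h2⟩ := seg k le_rfl i.val (by rw [htk]; exact i.isLt)
      rcases Nat.lt_or_ge (i.val + 1) (t (j + 1)) with h3 | h3
      · exfalso
        have hv : (i + 1).val = i.val + 1 := by
          rw [Fin.val_add, Fin.val_one' n]
          rw [Nat.mod_eq_of_lt (by omega : 1 < n)]
          exact Nat.mod_eq_of_lt hin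
        have e1 : θ i = c j := hconst j hj i h1 h2
        have e2 : θ (i + 1) = c j := hconst j hj (i + 1) (by omega) (by omega)
        exact hi (e1 ▸ e2)
      · exact ⟨j + 1, by omega, by omega, by omega⟩
    · exact ⟨k, by omega, le_rfl, by omega⟩
  by_contra hcon
  have hp : θ (p + 1) ≠ θ p := fun h => hcon (by rw [h]; ring)
  have hq : θ (p + (m : Fin n) + 1) ≠ θ (p + (m : Fin n)) := fun h => hcon (by rw [h]; ring)
  obtain ⟨j₁, hj₁1, hj₁k, hj₁⟩ := bdry p hp
  obtain ⟨j₂, hj₂1, hj₂k, hj₂⟩ := bdry (p + (m : Fin n)) hq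
  have hmv : ((m : Fin n)).val = m := Fin.val_cast_of_lt (by omega)
  have hqv : (p + (m : Fin n)).val = (p.val + m) % n := by rw [Fin.val_add, hmv]
  have hpn : p.val < n := p.isLt
  have htj₁ : t j₁ ≤ n := by have := mono k le_rfl j₁ hj₁k; omega
  have htj₂L : L ≤ t j₂ := by
    have h1 := mono j₂ hj₂k 0 (by omega)
    have : L * (j₂ - 0) = L * j₂ := by rw [Nat.sub_zero]
    have : L ≤ L * j₂ := Nat.le_mul_of_pos_right L (by omega)
    omega
  rcases Nat.lt_or_ge (p.val + m) n with hc | hc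
  · have hq2 : (p + (m : Fin n)).val = p.val + m := by rw [hqv, Nat.mod_eq_of_lt hc]
    rw [hq2] at hj₂
    -- t j₂ = t j₁ + m
    rcases Nat.lt_or_ge j₁ j₂ with hlt | hge
    · have h1 := mono j₂ hj₂k j₁ (by omega)
      have h2 : L ≤ L * (j₂ - j₁) := Nat.le_mul_of_pos_right L (by omega)
      omega
    · have h1 := mono j₁ hj₁k j₂ hge
      have h2 : 0 ≤ L * (j₁ - j₂) := Nat.zero_le _
      omega
  · have hq2 : (p + (m : Fin n)).val = p.val + m - n := by
      rw [hqv]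
      have : p.val + m = (p.val + m - n) + n := by omega
      rw [this, Nat.add_mod_right, Nat.mod_eq_of_lt (by omega)]
      omega
    rw [hq2] at hj₂
    omega

lemma sq_sum_orth {α : Type*} (s : Finset α) (x : α → ℝ)
    (h : ∀ a ∈ s, ∀ b ∈ s, a ≠ b → x a * x b = 0) :
    (∑ a ∈ s, x a) ^ 2 = ∑ a ∈ s, (x a) ^ 2 := by
  induction s using Finset.cons_induction with
  | empty => simp
  | cons a s ha ih =>
    rw [Finset.sum_cons, Finset.sum_cons, add_sq,
      ih (fun b hb c hc hbc => h b (by simp [hb]) c (by simp [hc]) hbc)]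
    have h0 : x a * ∑ b ∈ s, x b = 0 := by
      rw [Finset.mul_sum]
      exact Finset.sum_eq_zero fun b hb =>
        h a (by simp) b (by simp [hb]) (by rintro rfl; exact ha hb)
    rw [mul_assoc, h0]; ring

lemma shift_sum {n : ℕ} [NeZero n] (v : Fin n) (f : Fin n → ℝ) :
    ∑ i : Fin n, f (i + v) = ∑ i : Fin n, f i :=
  Fintype.sum_equiv (Equiv.addRight v) _ f (fun _ => rfl)

lemma telescope {n : ℕ} [NeZero n] (θ : Fin n → ℝ) (i : Fin n) (h : ℕ) :
    ∑ m ∈ Finset.range h, (θ (i + (m : Fin n) + 1) - θ (i + (m : Fin n)))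
      = θ (i + (h : Fin n)) - θ i := by
  induction h with
  | zero => simp
  | succ h ih =>
    rw [Finset.sum_range_succ, ih]
    push_cast
    ring_nf

lemma T_eq (n L : ℕ) [NeZero n] (hL : 1 ≤ L) (hLn : 2 * L < n) (θ : Fin n → ℝ)
    (hθ : θ ∈ ThetaSet n L) (h : ℕ) (hh : h ≤ L) :
    ∑ i : Fin n, θ i * θ (i + (h : Fin n))
      = (∑ i : Fin n, θ i * θ i)
        - (h : ℝ) * (∑ i : Fin n, (θ (i + 1) - θ i) ^ 2) / 2 := by
  have key : ∀ i : Fin n, (θ (i + (h : Fin n)) - θ i) ^ 2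
      = ∑ m ∈ Finset.range h, (θ (i + (m : Fin n) + 1) - θ (i + (m : Fin n))) ^ 2 := by
    intro i
    rw [← telescope θ i h]
    apply sq_sum_orth
    intro m₁ hm₁ m₂ hm₂ hne
    simp only [Finset.mem_range] at hm₁ hm₂
    rcases lt_or_gt_of_ne hne with hlt | hlt
    · have e : i + (m₁ : Fin n) + ((m₂ - m₁ : ℕ) : Fin n) = i + (m₂ : Fin n) := by
        rw [Nat.cast_sub (le_of_lt hlt)]; ring
      have := sep n L hL hLn θ hθ (i + (m₁ : Fin n)) (m₂ - m₁) (by omega) (by omega)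
      rw [e] at this; exact this
    · have e : i + (m₂ : Fin n) + ((m₁ - m₂ : ℕ) : Fin n) = i + (m₁ : Fin n) := by
        rw [Nat.cast_sub (le_of_lt hlt)]; ring
      have := sep n L hL hLn θ hθ (i + (m₂ : Fin n)) (m₁ - m₂) (by omega) (by omega)
      rw [e] at this; rw [mul_comm]; exact this
  have Q : ∑ i : Fin n, (θ (i + (h : Fin n)) - θ i) ^ 2
      = (h : ℝ) * ∑ i : Fin n, (θ (i + 1) - θ i) ^ 2 := by
    calc ∑ i : Fin n, (θ (i + (h : Fin n)) - θ i) ^ 2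
        = ∑ i : Fin n, ∑ m ∈ Finset.range h,
            (θ (i + (m : Fin n) + 1) - θ (i + (m : Fin n))) ^ 2 :=
          Finset.sum_congr rfl fun i _ => key i
      _ = ∑ m ∈ Finset.range h, ∑ i : Fin n,
            (θ (i + (m : Fin n) + 1) - θ (i + (m : Fin n))) ^ 2 := Finset.sum_comm
      _ = ∑ m ∈ Finset.range h, ∑ i : Fin n, (θ (i + 1) - θ i) ^ 2 :=
          Finset.sum_congr rfl fun m _ =>
            shift_sum ((m : Fin n)) (fun j => (θ (j + 1) - θ j) ^ 2)
      _ = (h : ℝ) * ∑ i : Fin n, (θ (i + 1) - θ i) ^ 2 := by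
          rw [Finset.sum_const, Finset.card_range, nsmul_eq_mul]
  have h1 : ∑ i : Fin n, θ (i + (h : Fin n)) * θ (i + (h : Fin n))
      = ∑ i : Fin n, θ i * θ i := shift_sum _ (fun j => θ j * θ j)
  have expand : ∑ i : Fin n, (θ (i + (h : Fin n)) - θ i) ^ 2
      = 2 * (∑ i : Fin n, θ i * θ i) - 2 * ∑ i : Fin n, θ i * θ (i + (h : Fin n)) := by
    calc ∑ i : Fin n, (θ (i + (h : Fin n)) - θ i) ^ 2
        = ∑ i : Fin n, (θ (i + (h : Fin n)) * θ (i + (h : Fin n))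
            - 2 * (θ i * θ (i + (h : Fin n))) + θ i * θ i) := by
          apply Finset.sum_congr rfl; intros; ring
      _ = _ := by
          rw [Finset.sum_add_distrib, Finset.sum_sub_distrib, h1, ← Finset.mul_sum]; ring
  rw [Q] at expand
  linarith

lemma mod_add_val {n : ℕ} [NeZero n] (i d : Fin n) :
    ((i + d).val + n - i.val) % n = d.val := by
  have hn : 0 < n := Nat.pos_of_ne_zero (NeZero.ne n)
  have h1 : (i + d).val = (i.val + d.val) % n := Fin.val_add i d
  have hi := i.isLt
  have hd := d.isLt
  rcases Nat.lt_or_ge (i.val + d.val) n with hc | hc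
  · rw [h1, Nat.mod_eq_of_lt hc]
    have : i.val + d.val + n - i.val = d.val + n := by omega
    rw [this, Nat.add_mod_right, Nat.mod_eq_of_lt hd]
  · have h2 : (i.val + d.val) % n = i.val + d.val - n := by
      have : i.val + d.val = (i.val + d.val - n) + n := by omega
      rw [this, Nat.add_mod_right, Nat.mod_eq_of_lt (by omega)]
      omega
    rw [h1, h2]
    have : i.val + d.val - n + n - i.val = d.val := by omega
    rw [this, Nat.mod_eq_of_lt hd]

lemma V_neg {n : ℕ} [NeZero n] (F : Fin n → Fin n → ℝ) (hF : ∀ i j, F i j = F j i)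
    (v : Fin n) : ∑ i : Fin n, F i (i + -v) = ∑ i : Fin n, F i (i + v) := by
  rw [← shift_sum v (fun i => F i (i + -v))]
  apply Finset.sum_congr rfl
  intro i _
  have e : i + v + -v = i := by ring
  rw [e, hF]

lemma main_split (n L : ℕ) [NeZero n] (hL : 1 ≤ L) (hLn : 2 * L < n)
    (a : ℕ → ℝ) (A : Matrix (Fin n) (Fin n) ℝ)
    (hA : ∀ i j : Fin n, A i j =
      (if (j.val + n - i.val) % n ≤ L then a ((j.val + n - i.val) % n)
       else if n - L ≤ (j.val + n - i.val) % n then a (n - (j.val + n - i.val) % n)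
       else 0))
    (F : Fin n → Fin n → ℝ) (hF : ∀ i j, F i j = F j i) :
    ∑ i : Fin n, ∑ j : Fin n, A i j * F i j
      = a 0 * (∑ i : Fin n, F i i)
        + 2 * ∑ h ∈ Finset.Icc 1 L, a h * (∑ i : Fin n, F i (i + (h : Fin n))) := by
  set W : ℕ → ℝ := fun m =>
    (if m ≤ L then a m else if n - L ≤ m then a (n - m) else 0)
      * ∑ i : Fin n, F i (i + (m : Fin n)) with hW
  have step1 : ∑ i : Fin n, ∑ j : Fin n, A i j * F i j = ∑ d ∈ Finset.range n, W d := by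
    have e1 : ∀ i : Fin n, ∑ j : Fin n, A i j * F i j
        = ∑ d : Fin n, A i (i + d) * F i (i + d) := fun i =>
      (Fintype.sum_equiv (Equiv.addLeft i) _ _ (fun d => rfl)).symm
    rw [Finset.sum_congr rfl (fun i _ => e1 i), Finset.sum_comm]
    have e2 : ∀ d : Fin n, ∑ i : Fin n, A i (i + d) * F i (i + d) = W d.val := by
      intro d
      have hAv : ∀ i : Fin n, A i (i + d)
          = (if d.val ≤ L then a d.val else if n - L ≤ d.val then a (n - d.val) else 0) := by
        intro i
        rw [hA i (i + d), mod_add_val]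
      rw [hW]
      simp only
      rw [Fin.cast_val_eq_self d, Finset.mul_sum]
      exact Finset.sum_congr rfl (fun i _ => by rw [hAv i])
    rw [Finset.sum_congr rfl (fun d _ => e2 d), Fin.sum_univ_eq_sum_range W n]
  rw [step1]
  have hsplit1 : Finset.range n = Finset.Ico 0 n := by rw [Finset.range_eq_Ico]
  rw [hsplit1, ← Finset.sum_Ico_consecutive W (by omega : 0 ≤ L + 1) (by omega : L + 1 ≤ n),
    ← Finset.sum_Ico_consecutive W (by omega : L + 1 ≤ n - L) (by omega : n - L ≤ n),
    ← Finset.sum_Ico_consecutive W (by omega : 0 ≤ 1) (by omega : 1 ≤ L + 1)]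
  have hmid : ∑ d ∈ Finset.Ico (L + 1) (n - L), W d = 0 := by
    apply Finset.sum_eq_zero
    intro d hd
    simp only [Finset.mem_Ico] at hd
    rw [hW]
    simp only
    rw [if_neg (by omega), if_neg (by omega), zero_mul]
  have h0 : ∑ d ∈ Finset.Ico 0 1, W d = a 0 * ∑ i : Fin n, F i i := by
    rw [show Finset.Ico 0 1 = {0} from rfl, Finset.sum_singleton, hW]
    simp
  have hlow : ∑ d ∈ Finset.Ico 1 (L + 1), W d
      = ∑ h ∈ Finset.Icc 1 L, a h * (∑ i : Fin n, F i (i + (h : Fin n))) := by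
    rw [Finset.Ico_add_one_right_eq_Icc]
    apply Finset.sum_congr rfl
    intro h hh
    simp only [Finset.mem_Icc] at hh
    rw [hW]
    simp only
    rw [if_pos hh.2]
  have hhigh : ∑ d ∈ Finset.Ico (n - L) n, W d
      = ∑ h ∈ Finset.Icc 1 L, a h * (∑ i : Fin n, F i (i + (h : Fin n))) := by
    refine Finset.sum_bij' (fun (d : ℕ) (_ : d ∈ Finset.Ico (n - L) n) => n - d)
      (fun (h : ℕ) (_ : h ∈ Finset.Icc 1 L) => n - h) ?_ ?_ ?_ ?_ ?_
    · intro d hd; simp only [Finset.mem_Ico] at hd; simp only [Finset.mem_Icc]; omega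
    · intro h hh; simp only [Finset.mem_Icc] at hh; simp only [Finset.mem_Ico]; omega
    · intro d hd; simp only [Finset.mem_Ico] at hd; show n - (n - d) = d; omega
    · intro h hh; simp only [Finset.mem_Icc] at hh; show n - (n - h) = h; omega
    · intro d hd
      simp only [Finset.mem_Ico] at hd
      rw [hW]
      simp only
      rw [if_neg (by omega), if_pos (by omega)]
      have e3 : ((d : ℕ) : Fin n) = -(((n - d : ℕ) : Fin n)) := by
        apply eq_neg_of_add_eq_zero_left
        rw [← Nat.cast_add, show d + (n - d) = n by omega, Fin.natCast_self]
      rw [e3, V_neg F hF]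
  rw [hmid, h0, hlow, hhigh]
  ring

lemma V_gamma (n : ℕ) [NeZero n] (γ : ℕ → ℝ) (h : ℕ) (hh1 : 1 ≤ h) (hhn : h < n) :
    ∑ i : Fin n, γ (((i.val : ℤ) - (((i + (h : Fin n)).val : ℕ) : ℤ)).natAbs)
      = ((n : ℝ) - (h : ℝ)) * γ h + (h : ℝ) * γ (n - h) := by
  have hval : ∀ i : Fin n, (i + (h : Fin n)).val = (i.val + h) % n := by
    intro i; rw [Fin.val_add, Fin.val_cast_of_lt hhn]
  set f : ℕ → ℝ := fun x => γ (((x : ℤ) - (((x + h) % n : ℕ) : ℤ)).natAbs) with hf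
  have e : ∑ i : Fin n, γ (((i.val : ℤ) - (((i + (h : Fin n)).val : ℕ) : ℤ)).natAbs)
      = ∑ x ∈ Finset.range n, f x := by
    rw [← Fin.sum_univ_eq_sum_range f n]
    refine Finset.sum_congr rfl fun i _ => ?_
    rw [hf]; simp only; rw [hval i]
  rw [e, Finset.range_eq_Ico,
    ← Finset.sum_Ico_consecutive f (Nat.zero_le (n - h)) (by omega : n - h ≤ n)]
  have e1 : ∑ x ∈ Finset.Ico 0 (n - h), f x = ((n : ℝ) - (h : ℝ)) * γ h := by
    have hc : ∀ x ∈ Finset.Ico 0 (n - h), f x = γ h := by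
      intro x hx
      simp only [Finset.mem_Ico] at hx
      rw [hf]; simp only
      rw [Nat.mod_eq_of_lt (by omega)]
      congr 1
      omega
    rw [Finset.sum_congr rfl hc, Finset.sum_const, Nat.card_Ico, Nat.sub_zero,
      nsmul_eq_mul, Nat.cast_sub hhn.le]
  have e2 : ∑ x ∈ Finset.Ico (n - h) n, f x = (h : ℝ) * γ (n - h) := by
    have hc : ∀ x ∈ Finset.Ico (n - h) n, f x = γ (n - h) := by
      intro x hx
      simp only [Finset.mem_Ico] at hx
      rw [hf]; simp only
      rw [show x + h = (x + h - n) + n by omega, Nat.add_mod_right,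
        Nat.mod_eq_of_lt (by omega)]
      congr 1
      omega
    rw [Finset.sum_congr rfl hc, Finset.sum_const, Nat.card_Ico,
      show n - (n - h) = h by omega, nsmul_eq_mul]
  rw [e1, e2]

lemma theta_zero (n L : ℕ) [NeZero n] (hL : 1 ≤ L) (hLn : 2 * L < n)
    (a : ℕ → ℝ) (A : Matrix (Fin n) (Fin n) ℝ)
    (hA : ∀ i j : Fin n, A i j =
      (if (j.val + n - i.val) % n ≤ L then a ((j.val + n - i.val) % n)
       else if n - L ≤ (j.val + n - i.val) % n then a (n - (j.val + n - i.val) % n)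
       else 0))
    (ha0 : a 0 + 2 * ∑ h ∈ Finset.Icc 1 L, a h = 0)
    (ha1 : ∑ h ∈ Finset.Icc 1 L, (h : ℝ) * a h = 0)
    (θ : Fin n → ℝ) (hθ : θ ∈ ThetaSet n L) :
    ∑ i : Fin n, ∑ j : Fin n, A i j * (θ i * θ j) = 0 := by
  rw [main_split n L hL hLn a A hA (fun i j => θ i * θ j) (fun i j => mul_comm _ _)]
  have h1 : ∑ h ∈ Finset.Icc 1 L, a h * (∑ i : Fin n, θ i * θ (i + (h : Fin n)))
      = (∑ h ∈ Finset.Icc 1 L, a h) * (∑ i : Fin n, θ i * θ i)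
        - (∑ h ∈ Finset.Icc 1 L, (h : ℝ) * a h)
          * ((∑ i : Fin n, (θ (i + 1) - θ i) ^ 2) / 2) := by
    have hc : ∀ h ∈ Finset.Icc 1 L, a h * (∑ i : Fin n, θ i * θ (i + (h : Fin n)))
        = a h * (∑ i : Fin n, θ i * θ i)
          - ((h : ℝ) * a h) * ((∑ i : Fin n, (θ (i + 1) - θ i) ^ 2) / 2) := by
      intro h hh
      simp only [Finset.mem_Icc] at hh
      rw [T_eq n L hL hLn θ hθ h hh.2]
      ring
    rw [Finset.sum_congr rfl hc, Finset.sum_sub_distrib, ← Finset.sum_mul, ← Finset.sum_mul]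
  rw [h1]
  linear_combination (∑ i : Fin n, θ i * θ i) * ha0
    - (∑ i : Fin n, (θ (i + 1) - θ i) ^ 2) * ha1

lemma gamma_sum (n L : ℕ) [NeZero n] (hL : 1 ≤ L) (hLn : 2 * L < n)
    (a : ℕ → ℝ) (A : Matrix (Fin n) (Fin n) ℝ)
    (hA : ∀ i j : Fin n, A i j =
      (if (j.val + n - i.val) % n ≤ L then a ((j.val + n - i.val) % n)
       else if n - L ≤ (j.val + n - i.val) % n then a (n - (j.val + n - i.val) % n)
       else 0))
    (γ : ℕ → ℝ) :
    ∑ i : Fin n, ∑ j : Fin n, A i j * γ (((i.val : ℤ) - (j.val : ℤ)).natAbs)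
      = (n : ℝ) * a 0 * γ 0
        + 2 * ∑ h ∈ Finset.Icc 1 L, ((n : ℝ) - (h : ℝ)) * a h * γ h
        + 2 * ∑ h ∈ Finset.Icc 1 L, (h : ℝ) * a h * γ (n - h) := by
  rw [main_split n L hL hLn a A hA (fun i j => γ (((i.val : ℤ) - (j.val : ℤ)).natAbs))
    (fun i j => congrArg γ (by omega))]
  have hdiag : ∑ i : Fin n, γ (((i.val : ℤ) - (i.val : ℤ)).natAbs) = (n : ℝ) * γ 0 := by
    simp [Finset.sum_const, Fintype.card_fin, nsmul_eq_mul]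
  have hV : ∀ h ∈ Finset.Icc 1 L,
      a h * (∑ i : Fin n, γ (((i.val : ℤ) - (((i + (h : Fin n)).val : ℕ) : ℤ)).natAbs))
        = ((n : ℝ) - (h : ℝ)) * a h * γ h + (h : ℝ) * a h * γ (n - h) := by
    intro h hh
    simp only [Finset.mem_Icc] at hh
    rw [V_gamma n γ h hh.1 (by omega)]
    ring
  rw [hdiag, Finset.sum_congr rfl hV, Finset.sum_add_distrib]
  ring

/-- For `A ∈ 𝒜_L` (circulant symmetric with first row
`(a_0, a_1, …, a_L, 0, …, 0, a_L, …, a_2, a_1)` and `a_0 + 2∑a_h = 0`, `∑h·a_h = 0`),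
`θ ∈ Θ_L`, and `ε` mean-zero with stationary covariances,
`E[XᵀAX] = n·a_0·γ_0 + 2∑_{h=1}^L (n-h)a_h γ_h + 2∑_{h=1}^L h·a_h γ_{n-h}`;
moreover `a_0 = 0 ↔ a_1 + ⋯ + a_L = 0`. -/
theorem stmt_4
    {Ω : Type*} [MeasurableSpace Ω] (μ : Measure Ω) [IsProbabilityMeasure μ]
    (n L : ℕ) (hL : 1 ≤ L) (hLn : 2 * L < n)
    (a : ℕ → ℝ) (A : Matrix (Fin n) (Fin n) ℝ)
    (hA : ∀ i j : Fin n, A i j =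
      (if (j.val + n - i.val) % n ≤ L then a ((j.val + n - i.val) % n)
       else if n - L ≤ (j.val + n - i.val) % n then a (n - (j.val + n - i.val) % n)
       else 0))
    (ha0 : a 0 + 2 * ∑ h ∈ Finset.Icc 1 L, a h = 0)
    (ha1 : ∑ h ∈ Finset.Icc 1 L, (h : ℝ) * a h = 0)
    (γ : ℕ → ℝ) (θ : Fin n → ℝ) (hθ : θ ∈ ThetaSet n L) (ε : Fin n → Ω → ℝ)
    (hint : ∀ i, Integrable (ε i) μ)
    (hint2 : ∀ i j, Integrable (fun ω => ε i ω * ε j ω) μ)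
    (hmean : ∀ i, ∫ ω, ε i ω ∂μ = 0)
    (hcov : ∀ i j : Fin n, ∫ ω, ε i ω * ε j ω ∂μ = γ ((i.val : ℤ) - (j.val : ℤ)).natAbs) :
    (∫ ω, ∑ i : Fin n, ∑ j : Fin n, (θ i + ε i ω) * A i j * (θ j + ε j ω) ∂μ
      = (n : ℝ) * a 0 * γ 0
        + 2 * ∑ h ∈ Finset.Icc 1 L, ((n : ℝ) - (h : ℝ)) * a h * γ h
        + 2 * ∑ h ∈ Finset.Icc 1 L, (h : ℝ) * a h * γ (n - h))
    ∧ (a 0 = 0 ↔ ∑ h ∈ Finset.Icc 1 L, a h = 0) := by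
  haveI : NeZero n := ⟨by omega⟩
  constructor
  · have hIntegrand : ∀ i j : Fin n, (fun ω => (θ i + ε i ω) * A i j * (θ j + ε j ω))
        = fun ω => (A i j * (θ i * θ j) + (A i j * θ i) * ε j ω)
          + ((A i j * θ j) * ε i ω + A i j * (ε i ω * ε j ω)) := by
      intro i j; funext ω; ring
    have hInt1 : ∀ i j : Fin n,
        Integrable (fun ω => A i j * (θ i * θ j) + (A i j * θ i) * ε j ω) μ :=
      fun i j => (integrable_const _).add ((hint j).const_mul _)
    have hInt2 : ∀ i j : Fin n,
        Integrable (fun ω => (A i j * θ j) * ε i ω + A i j * (ε i ω * ε j ω)) μ :=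
      fun i j => ((hint i).const_mul _).add ((hint2 i j).const_mul _)
    have hval : ∀ i j : Fin n, ∫ ω, (θ i + ε i ω) * A i j * (θ j + ε j ω) ∂μ
        = A i j * (θ i * θ j) + A i j * γ (((i.val : ℤ) - (j.val : ℤ)).natAbs) := by
      intro i j
      rw [hIntegrand i j, integral_add (hInt1 i j) (hInt2 i j),
        integral_add (integrable_const _) ((hint j).const_mul _),
        integral_add ((hint i).const_mul _) ((hint2 i j).const_mul _)]
      simp only [integral_const_mul, hmean, hcov, integral_const, measure_univ, probReal_univ,
        ENNReal.toReal_one, one_smul, mul_zero, add_zero, zero_add]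
    calc ∫ ω, ∑ i : Fin n, ∑ j : Fin n, (θ i + ε i ω) * A i j * (θ j + ε j ω) ∂μ
        = ∑ i : Fin n, ∑ j : Fin n, ∫ ω, (θ i + ε i ω) * A i j * (θ j + ε j ω) ∂μ := by
          rw [integral_finset_sum _ (fun i _ => integrable_finset_sum _ (fun j _ => by
            rw [hIntegrand i j]; exact (hInt1 i j).add (hInt2 i j)))]
          exact Finset.sum_congr rfl fun i _ =>
            integral_finset_sum _ (fun j _ => by
              rw [hIntegrand i j]; exact (hInt1 i j).add (hInt2 i j))
      _ = ∑ i : Fin n, ∑ j : Fin n,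
            (A i j * (θ i * θ j) + A i j * γ (((i.val : ℤ) - (j.val : ℤ)).natAbs)) :=
          Finset.sum_congr rfl fun i _ => Finset.sum_congr rfl fun j _ => hval i j
      _ = (∑ i : Fin n, ∑ j : Fin n, A i j * (θ i * θ j))
            + ∑ i : Fin n, ∑ j : Fin n, A i j * γ (((i.val : ℤ) - (j.val : ℤ)).natAbs) := by
          rw [Finset.sum_congr rfl (fun i _ => Finset.sum_add_distrib),
            Finset.sum_add_distrib]
      _ = (n : ℝ) * a 0 * γ 0
            + 2 * ∑ h ∈ Finset.Icc 1 L, ((n : ℝ) - (h : ℝ)) * a h * γ h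
            + 2 * ∑ h ∈ Finset.Icc 1 L, (h : ℝ) * a h * γ (n - h) := by
          rw [theta_zero n L hL hLn a A hA ha0 ha1 θ hθ,
            gamma_sum n L hL hLn a A hA γ]
          ring
  · constructor <;> intro hh <;> linarith
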